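/- Let g_λ(n) denote the number of vacillating tableaux of shape λ and length 2n. Then for all m, n ≥ 0, the sum over all integer partitions λ of g_λ(n)·g_λ(m) equals the Bell number B(m+n). -/

import Mathlib

def AddOne (μ ν : YoungDiagram) : Prop := μ ≤ ν ∧ ν.card = μ.card + 1

def IsVacTab (n : ℕ) (lam : YoungDiagram) (V : ℕ → YoungDiagram) : Prop :=
  V 0 = ⊥ ∧ V (2 * n) = lam ∧ (∀ k, 2 * n ≤ k → V k = lam) ∧
  (∀ i < n, V (2 * i + 1) = V (2 * i) ∨ AddOne (V (2 * i + 1)) (V (2 * i))) ∧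
  (∀ i < n, V (2 * i + 2) = V (2 * i + 1) ∨ AddOne (V (2 * i + 1)) (V (2 * i + 2)))

/-- `g_λ(n)`: the number of vacillating tableaux of shape `λ` and length `2n`. -/
noncomputable def g (lam : YoungDiagram) (n : ℕ) : ℕ :=
  Nat.card {V : ℕ → YoungDiagram // IsVacTab n lam V}

namespace VT

open YoungDiagram Finset

lemma addOne_cells {μ ν : YoungDiagram} (h : AddOne μ ν) :
    ∃ c, c ∉ μ.cells ∧ ν.cells = insert c μ.cells := by
  obtain ⟨hle, hcard⟩ := h
  have hsub : μ.cells ⊆ ν.cells := hle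
  have h1 : (ν.cells \ μ.cells).card = 1 := by
    rw [Finset.card_sdiff_of_subset hsub]
    have := hcard
    unfold YoungDiagram.card at this
    omega
  obtain ⟨c, hc⟩ := Finset.card_eq_one.mp h1
  have hcmem : c ∈ ν.cells \ μ.cells := hc ▸ Finset.mem_singleton_self c
  rw [Finset.mem_sdiff] at hcmem
  refine ⟨c, hcmem.2, ?_⟩
  apply Finset.Subset.antisymm
  · intro x hx
    by_cases hxμ : x ∈ μ.cells
    · exact Finset.mem_insert_of_mem hxμ
    · have : x ∈ ν.cells \ μ.cells := Finset.mem_sdiff.mpr ⟨hx, hxμ⟩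
      rw [hc, Finset.mem_singleton] at this
      exact this ▸ Finset.mem_insert_self _ _
  · intro x hx
    rcases Finset.mem_insert.mp hx with rfl | hx
    · exact hcmem.1
    · exact hsub hx

/-- Rows where a cell can be added. -/
def addableRows (μ : YoungDiagram) : Finset ℕ :=
  (Finset.range (μ.colLen 0 + 1)).filter fun i => i = 0 ∨ μ.rowLen i < μ.rowLen (i - 1)

/-- Rows where a cell can be removed. -/
def removableRows (μ : YoungDiagram) : Finset ℕ :=
  (Finset.range (μ.colLen 0)).filter fun i => μ.rowLen (i + 1) < μ.rowLen i

lemma rowLen_pos_iff {μ : YoungDiagram} {i : ℕ} : 0 < μ.rowLen i ↔ i < μ.colLen 0 := by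
  rw [← mem_iff_lt_rowLen, ← mem_iff_lt_colLen]

lemma mem_addableRows {μ : YoungDiagram} {i : ℕ} :
    i ∈ addableRows μ ↔ i = 0 ∨ μ.rowLen i < μ.rowLen (i - 1) := by
  rw [addableRows, Finset.mem_filter, Finset.mem_range]
  constructor
  · exact fun h => h.2
  · intro h
    refine ⟨?_, h⟩
    rcases h with rfl | h
    · omega
    · have : 0 < μ.rowLen (i - 1) := by omega
      rw [rowLen_pos_iff] at this
      omega

lemma mem_removableRows {μ : YoungDiagram} {i : ℕ} :
    i ∈ removableRows μ ↔ μ.rowLen (i + 1) < μ.rowLen i := by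
  rw [removableRows, Finset.mem_filter, Finset.mem_range]
  constructor
  · exact fun h => h.2
  · intro h
    have : 0 < μ.rowLen i := by omega
    rw [rowLen_pos_iff] at this
    exact ⟨this, h⟩

lemma card_addableRows (μ : YoungDiagram) :
    (addableRows μ).card = (removableRows μ).card + 1 := by
  have heq : addableRows μ = insert 0 ((removableRows μ).image (· + 1)) := by
    ext i
    rw [mem_addableRows, Finset.mem_insert, Finset.mem_image]
    constructor
    · rintro (rfl | h)
      · exact Or.inl rfl
      · rcases Nat.eq_zero_or_pos i with rfl | hi
        · exact Or.inl rfl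
        · refine Or.inr ⟨i - 1, ?_, by omega⟩
          rw [mem_removableRows]
          have : i - 1 + 1 = i := by omega
          rw [this]
          exact h
    · rintro (rfl | ⟨j, hj, rfl⟩)
      · exact Or.inl rfl
      · rw [mem_removableRows] at hj
        refine Or.inr ?_
        simpa using hj
  rw [heq, Finset.card_insert_of_notMem, Finset.card_image_of_injective _ (fun a b => by omega)]
  simp

lemma addCell_lowerSet {μ : YoungDiagram} {i : ℕ}
    (h : i = 0 ∨ μ.rowLen i < μ.rowLen (i - 1)) :
    IsLowerSet (↑(insert (i, μ.rowLen i) μ.cells) : Set (ℕ × ℕ)) := by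
  intro a b hba ha
  simp only [Finset.coe_insert, Set.mem_insert_iff, Finset.mem_coe, mem_cells] at ha ⊢
  rcases ha with rfl | ha
  · obtain ⟨b1, b2⟩ := b
    obtain ⟨hb1, hb2⟩ := Prod.mk_le_mk.mp hba
    by_cases hb1i : b1 = i
    · subst hb1i
      by_cases hb2r : b2 = μ.rowLen b1
      · exact Or.inl (by rw [hb2r])
      · exact Or.inr (by rw [mem_iff_lt_rowLen]; omega)
    · refine Or.inr ?_
      rw [mem_iff_lt_rowLen]
      have hi0 : i ≠ 0 := by omega
      rcases h with h | h
      · omega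
      · have h1 : b1 ≤ i - 1 := by omega
        have := μ.rowLen_anti b1 (i - 1) h1
        omega
  · exact Or.inr (μ.isLowerSet hba ha)

/-- Add a cell at the end of row `i` (junk value `μ` if not addable). -/
def addCell (μ : YoungDiagram) (i : ℕ) : YoungDiagram :=
  if h : i = 0 ∨ μ.rowLen i < μ.rowLen (i - 1) then
    ⟨insert (i, μ.rowLen i) μ.cells, addCell_lowerSet h⟩
  else μ

lemma addCell_cells {μ : YoungDiagram} {i : ℕ} (h : i ∈ addableRows μ) :
    (addCell μ i).cells = insert (i, μ.rowLen i) μ.cells := by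
  rw [mem_addableRows] at h
  rw [addCell, dif_pos h]

lemma corner_not_mem (μ : YoungDiagram) (i : ℕ) : (i, μ.rowLen i) ∉ μ := by
  rw [mem_iff_lt_rowLen]; omega

lemma addOne_addCell {μ : YoungDiagram} {i : ℕ} (h : i ∈ addableRows μ) :
    AddOne μ (addCell μ i) := by
  constructor
  · intro c hc
    show c ∈ (addCell μ i).cells
    rw [addCell_cells h]
    exact Finset.mem_insert_of_mem hc
  · show (addCell μ i).cells.card = μ.cells.card + 1
    rw [addCell_cells h, Finset.card_insert_of_notMem (corner_not_mem μ i)]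

lemma addOne_iff {μ ν : YoungDiagram} :
    AddOne μ ν ↔ ∃ i ∈ addableRows μ, ν = addCell μ i := by
  constructor
  · intro h
    obtain ⟨c, hcn, hcells⟩ := addOne_cells h
    obtain ⟨i, j⟩ := c
    have hcν : (i, j) ∈ ν := by rw [← mem_cells, hcells]; exact Finset.mem_insert_self _ _
    have hj : j = μ.rowLen i := by
      have hge : μ.rowLen i ≤ j := by
        by_contra hlt
        exact hcn (by rw [mem_cells, mem_iff_lt_rowLen]; omega)
      rcases Nat.eq_or_lt_of_le hge with heq | hlt
      · omega
      · exfalso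
        have hmem : (i, μ.rowLen i) ∈ ν := ν.up_left_mem le_rfl (le_of_lt hlt) hcν
        rw [← mem_cells, hcells, Finset.mem_insert] at hmem
        rcases hmem with heq | hmem
        · have := (Prod.mk.injEq _ _ _ _).mp heq
          omega
        · exact corner_not_mem μ i hmem
    subst hj
    have haddable : i ∈ addableRows μ := by
      rw [mem_addableRows]
      rcases Nat.eq_zero_or_pos i with rfl | hi
      · exact Or.inl rfl
      · refine Or.inr ?_
        have hmem : (i - 1, μ.rowLen i) ∈ ν := ν.up_left_mem (by omega) le_rfl hcν
        rw [← mem_cells, hcells, Finset.mem_insert] at hmem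
        rcases hmem with heq | hmem
        · exfalso
          have := (Prod.mk.injEq _ _ _ _).mp heq
          omega
        · rw [mem_cells, mem_iff_lt_rowLen] at hmem
          have : i - 1 + 1 = i := by omega
          omega
    refine ⟨i, haddable, ?_⟩
    ext1
    rw [addCell_cells haddable, hcells]
  · rintro ⟨i, hi, rfl⟩
    exact addOne_addCell hi

lemma removeCell_lowerSet {μ : YoungDiagram} {i : ℕ} (h : μ.rowLen (i + 1) < μ.rowLen i) :
    IsLowerSet (↑(μ.cells.erase (i, μ.rowLen i - 1)) : Set (ℕ × ℕ)) := by
  intro a b hba ha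
  simp only [Finset.coe_erase, Set.mem_diff, Finset.mem_coe, mem_cells,
    Set.mem_singleton_iff] at ha ⊢
  obtain ⟨haμ, hane⟩ := ha
  refine ⟨μ.isLowerSet hba haμ, ?_⟩
  rintro rfl
  obtain ⟨a1, a2⟩ := a
  obtain ⟨hb1, hb2⟩ := Prod.mk_le_mk.mp hba
  have ha2 : a2 < μ.rowLen a1 := mem_iff_lt_rowLen.mp haμ
  have hri : μ.rowLen a1 ≤ μ.rowLen i := μ.rowLen_anti i a1 hb1
  rcases Nat.eq_or_lt_of_le hb1 with rfl | hlt
  · have ha2' : a2 = μ.rowLen i - 1 := by omega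
    exact hane (by rw [ha2'])
  · have : μ.rowLen a1 ≤ μ.rowLen (i + 1) := μ.rowLen_anti (i + 1) a1 (by omega)
    omega

/-- Remove the cell at the end of row `i` (junk value `μ` if not removable). -/
def removeCell (μ : YoungDiagram) (i : ℕ) : YoungDiagram :=
  if h : μ.rowLen (i + 1) < μ.rowLen i then
    ⟨μ.cells.erase (i, μ.rowLen i - 1), removeCell_lowerSet h⟩
  else μ

lemma removeCell_cells {μ : YoungDiagram} {i : ℕ} (h : i ∈ removableRows μ) :
    (removeCell μ i).cells = μ.cells.erase (i, μ.rowLen i - 1) := by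
  rw [mem_removableRows] at h
  rw [removeCell, dif_pos h]

lemma corner_mem {μ : YoungDiagram} {i : ℕ} (h : i ∈ removableRows μ) :
    (i, μ.rowLen i - 1) ∈ μ.cells := by
  rw [mem_removableRows] at h
  rw [mem_cells, mem_iff_lt_rowLen]
  omega

lemma addOne_removeCell {μ : YoungDiagram} {i : ℕ} (h : i ∈ removableRows μ) :
    AddOne (removeCell μ i) μ := by
  constructor
  · intro c hc
    have : c ∈ (removeCell μ i).cells := hc
    rw [removeCell_cells h] at this
    exact Finset.mem_of_mem_erase this
  · show μ.cells.card = (removeCell μ i).cells.card + 1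
    rw [removeCell_cells h, Finset.card_erase_of_mem (corner_mem h)]
    have : 0 < μ.cells.card := Finset.card_pos.mpr ⟨_, corner_mem h⟩
    omega

lemma addOne_to_iff {σ μ : YoungDiagram} :
    AddOne σ μ ↔ ∃ i ∈ removableRows μ, σ = removeCell μ i := by
  constructor
  · intro h
    obtain ⟨c, hcn, hcells⟩ := addOne_cells h
    obtain ⟨i, j⟩ := c
    have hcμ : (i, j) ∈ μ := by rw [← mem_cells, hcells]; exact Finset.mem_insert_self _ _
    have hj : j + 1 = μ.rowLen i := by
      have hlt : j < μ.rowLen i := mem_iff_lt_rowLen.mp hcμ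
      by_contra hne
      have hmem : (i, j + 1) ∈ μ := by rw [mem_iff_lt_rowLen]; omega
      rw [← mem_cells, hcells, Finset.mem_insert] at hmem
      rcases hmem with heq | hmem
      · have := (Prod.mk.injEq _ _ _ _).mp heq; omega
      · have : (i, j) ∈ σ := σ.up_left_mem le_rfl (by omega) hmem
        exact hcn this
    have hrem : i ∈ removableRows μ := by
      rw [mem_removableRows]
      by_contra hge
      have hmem : (i + 1, j) ∈ μ := by
        rw [mem_iff_lt_rowLen]; omega
      rw [← mem_cells, hcells, Finset.mem_insert] at hmem
      rcases hmem with heq | hmem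
      · have := (Prod.mk.injEq _ _ _ _).mp heq; omega
      · have : (i, j) ∈ σ := σ.up_left_mem (by omega) le_rfl hmem
        exact hcn this
    refine ⟨i, hrem, ?_⟩
    ext1
    rw [removeCell_cells hrem]
    have hc' : (i, μ.rowLen i - 1) = (i, j) := by
      have : μ.rowLen i - 1 = j := by omega
      rw [this]
    rw [hc', hcells, Finset.erase_insert hcn]
  · rintro ⟨i, hi, rfl⟩
    exact addOne_removeCell hi

instance : DecidableEq YoungDiagram :=
  fun μ ν => decidable_of_iff (μ.cells = ν.cells) (YoungDiagram.ext_iff).symm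

/-- The Finset of diagrams covering `μ`. -/
def covers (μ : YoungDiagram) : Finset YoungDiagram :=
  (addableRows μ).image (addCell μ)

/-- The Finset of diagrams covered by `μ`. -/
def lowers (μ : YoungDiagram) : Finset YoungDiagram :=
  (removableRows μ).image (removeCell μ)

lemma mem_covers {μ ν : YoungDiagram} : ν ∈ covers μ ↔ AddOne μ ν := by
  rw [covers, Finset.mem_image, addOne_iff]
  constructor
  · rintro ⟨i, hi, rfl⟩; exact ⟨i, hi, rfl⟩
  · rintro ⟨i, hi, rfl⟩; exact ⟨i, hi, rfl⟩

lemma mem_lowers {σ μ : YoungDiagram} : σ ∈ lowers μ ↔ AddOne σ μ := by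
  rw [lowers, Finset.mem_image, addOne_to_iff]
  constructor
  · rintro ⟨i, hi, rfl⟩; exact ⟨i, hi, rfl⟩
  · rintro ⟨i, hi, rfl⟩; exact ⟨i, hi, rfl⟩

lemma card_covers (μ : YoungDiagram) : (covers μ).card = (addableRows μ).card := by
  rw [covers]
  apply Finset.card_image_of_injOn
  intro a ha b hb hab
  by_contra hne
  have hmem : (a, μ.rowLen a) ∈ (addCell μ b).cells := by
    rw [← hab, addCell_cells ha]; exact Finset.mem_insert_self _ _
  rw [addCell_cells hb, Finset.mem_insert] at hmem
  rcases hmem with heq | hmem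
  · exact hne ((Prod.mk.injEq _ _ _ _).mp heq).1
  · exact corner_not_mem μ a hmem

lemma card_lowers (μ : YoungDiagram) : (lowers μ).card = (removableRows μ).card := by
  rw [lowers]
  apply Finset.card_image_of_injOn
  intro a ha b hb hab
  by_contra hne
  have hmem : (a, μ.rowLen a - 1) ∉ (removeCell μ a).cells := by
    rw [removeCell_cells ha]; exact Finset.notMem_erase _ _
  rw [hab, removeCell_cells hb, Finset.mem_erase] at hmem
  push_neg at hmem
  have h1 := hmem (by
    simp only [ne_eq, Prod.mk.injEq, not_and]
    intro h; exact absurd h hne)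
  exact h1 (corner_mem ha)

/-- DP1: one more cover than lower cover. -/
lemma card_covers_eq (μ : YoungDiagram) : (covers μ).card = (lowers μ).card + 1 := by
  rw [card_covers, card_lowers, card_addableRows]

lemma card_sup_inf (μ ν : YoungDiagram) :
    (μ ⊔ ν).card + (μ ⊓ ν).card = μ.card + ν.card := by
  show (μ.cells ∪ ν.cells).card + (μ.cells ∩ ν.cells).card = _
  exact Finset.card_union_add_card_inter _ _

lemma card_le_of_le {μ ν : YoungDiagram} (h : μ ≤ ν) : μ.card ≤ ν.card :=
  Finset.card_le_card h

lemma eq_of_le_of_card_le {μ ν : YoungDiagram} (h : μ ≤ ν) (hc : ν.card ≤ μ.card) : μ = ν := by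
  ext1
  exact Finset.eq_of_subset_of_card_le h hc

lemma claimA {μ ν ρ : YoungDiagram} (hne : μ ≠ ν) (h1 : AddOne μ ρ) (h2 : AddOne ν ρ) :
    ρ = μ ⊔ ν ∧ AddOne (μ ⊓ ν) μ ∧ AddOne (μ ⊓ ν) ν := by
  have hcard : μ.card = ν.card := by
    have := h1.2; have := h2.2; omega
  have hsup_le : μ ⊔ ν ≤ ρ := sup_le h1.1 h2.1
  have hinf_lt : (μ ⊓ ν).card + 1 ≤ μ.card := by
    rcases Nat.lt_or_ge ((μ ⊓ ν).card) μ.card with h | h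
    · omega
    · exfalso
      have : μ ⊓ ν = μ := eq_of_le_of_card_le inf_le_left h
      have hμν : μ ≤ ν := by rw [← this]; exact inf_le_right
      exact hne (eq_of_le_of_card_le hμν (by omega))
  have hkey := card_sup_inf μ ν
  have hsup_card : ρ.card ≤ (μ ⊔ ν).card + 0 := by
    have h3 : (μ ⊔ ν).card ≤ ρ.card := card_le_of_le hsup_le
    have h4 : ρ.card = μ.card + 1 := h1.2
    omega
  have hρ : ρ = μ ⊔ ν := (eq_of_le_of_card_le hsup_le (by omega)).symm
  have hinf_card : μ.card = (μ ⊓ ν).card + 1 := by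
    have h4 : ρ.card = μ.card + 1 := h1.2
    have h5 : (μ ⊔ ν).card = ρ.card := by rw [hρ]
    omega
  exact ⟨hρ, ⟨inf_le_left, hinf_card⟩, ⟨inf_le_right, by omega⟩⟩

lemma claimB {μ ν σ : YoungDiagram} (hne : μ ≠ ν) (h1 : AddOne σ μ) (h2 : AddOne σ ν) :
    σ = μ ⊓ ν ∧ AddOne μ (μ ⊔ ν) ∧ AddOne ν (μ ⊔ ν) := by
  have hcard : μ.card = ν.card := by
    have := h1.2; have := h2.2; omega
  have hle : σ ≤ μ ⊓ ν := le_inf h1.1 h2.1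
  have hinf_lt : (μ ⊓ ν).card + 1 ≤ μ.card := by
    rcases Nat.lt_or_ge ((μ ⊓ ν).card) μ.card with h | h
    · omega
    · exfalso
      have : μ ⊓ ν = μ := eq_of_le_of_card_le inf_le_left h
      have hμν : μ ≤ ν := by rw [← this]; exact inf_le_right
      exact hne (eq_of_le_of_card_le hμν (by omega))
  have hσ : σ = μ ⊓ ν := by
    apply eq_of_le_of_card_le hle
    have := h1.2
    have := card_le_of_le hle
    omega
  have hkey := card_sup_inf μ ν
  have hσc : σ.card = (μ ⊓ ν).card := by rw [hσ]
  have h1' := h1.2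
  refine ⟨hσ, ⟨le_sup_left, by omega⟩, ⟨le_sup_right, by omega⟩⟩

lemma inter_covers_card {μ ν : YoungDiagram} (hne : μ ≠ ν) :
    (covers μ ∩ covers ν).card = (lowers μ ∩ lowers ν).card := by
  have hsub1 : covers μ ∩ covers ν ⊆ {μ ⊔ ν} := by
    intro ρ hρ
    rw [Finset.mem_inter, mem_covers, mem_covers] at hρ
    rw [Finset.mem_singleton]
    exact (claimA hne hρ.1 hρ.2).1
  have hsub2 : lowers μ ∩ lowers ν ⊆ {μ ⊓ ν} := by
    intro σ hσ
    rw [Finset.mem_inter, mem_lowers, mem_lowers] at hσ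
    rw [Finset.mem_singleton]
    exact (claimB hne hσ.1 hσ.2).1
  have hiff : (μ ⊔ ν ∈ covers μ ∩ covers ν) ↔ (μ ⊓ ν ∈ lowers μ ∩ lowers ν) := by
    rw [Finset.mem_inter, Finset.mem_inter, mem_covers, mem_covers, mem_lowers, mem_lowers]
    constructor
    · rintro ⟨h1, h2⟩
      exact ⟨(claimA hne h1 h2).2.1, (claimA hne h1 h2).2.2⟩
    · rintro ⟨h1, h2⟩
      exact ⟨(claimB hne h1 h2).2.1, (claimB hne h1 h2).2.2⟩
  rcases Finset.subset_singleton_iff.mp hsub1 with h1 | h1 <;>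
    rcases Finset.subset_singleton_iff.mp hsub2 with h2 | h2
  · rw [h1, h2]
  · exfalso
    have : μ ⊔ ν ∈ covers μ ∩ covers ν := hiff.mpr (h2 ▸ Finset.mem_singleton_self _)
    rw [h1] at this
    exact absurd this (Finset.notMem_empty _)
  · exfalso
    have : μ ⊓ ν ∈ lowers μ ∩ lowers ν := hiff.mp (h1 ▸ Finset.mem_singleton_self _)
    rw [h2] at this
    exact absurd this (Finset.notMem_empty _)
  · rw [h1, h2, Finset.card_singleton, Finset.card_singleton]

lemma cell_lt_card {μ : YoungDiagram} {i j : ℕ} (h : (i, j) ∈ μ) : i < μ.card ∧ j < μ.card := by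
  constructor
  · have hsub : (Finset.range (i + 1)).image (fun i' => (i', j)) ⊆ μ.cells := by
      intro x hx
      simp only [Finset.mem_image, Finset.mem_range] at hx
      obtain ⟨i', hi', rfl⟩ := hx
      exact μ.up_left_mem (by omega) le_rfl h
    have := Finset.card_le_card hsub
    rw [Finset.card_image_of_injective _ (fun a b hab => (Prod.mk.injEq _ _ _ _).mp hab |>.1),
      Finset.card_range] at this
    exact this
  · have hsub : (Finset.range (j + 1)).image (fun j' => (i, j')) ⊆ μ.cells := by
      intro x hx
      simp only [Finset.mem_image, Finset.mem_range] at hx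
      obtain ⟨j', hj', rfl⟩ := hx
      exact μ.up_left_mem le_rfl (by omega) h
    have := Finset.card_le_card hsub
    rw [Finset.card_image_of_injective _ (fun a b hab => (Prod.mk.injEq _ _ _ _).mp hab |>.2),
      Finset.card_range] at this
    exact this

lemma finite_card_le (N : ℕ) : {μ : YoungDiagram | μ.card ≤ N}.Finite := by
  have hinj : Set.InjOn YoungDiagram.cells {μ : YoungDiagram | μ.card ≤ N} := by
    intro a _ b _ hab
    ext1
    exact hab
  apply Set.Finite.of_finite_image _ hinj
  apply Set.Finite.subset (Finset.finite_toSet ((Finset.range N ×ˢ Finset.range N).powerset))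
  rintro s ⟨μ, hμ, rfl⟩
  simp only [Finset.coe_powerset, Set.mem_preimage, Set.mem_powerset_iff, Finset.coe_product]
  intro c hc
  obtain ⟨i, j⟩ := c
  have := cell_lt_card (mem_cells (i, j) |>.mp hc)
  simp only [Set.mem_prod, Set.mem_setOf_eq] at hμ ⊢
  constructor <;> simp only [Finset.mem_coe, Finset.mem_range] <;> omega

lemma vacTab_card_even {n : ℕ} {lam : YoungDiagram} {V : ℕ → YoungDiagram}
    (hV : IsVacTab n lam V) : ∀ i ≤ n, (V (2 * i)).card ≤ i := by
  obtain ⟨h0, -, -, hodd, heven⟩ := hV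
  intro i
  induction i with
  | zero => intro _; rw [h0]; simp
  | succ i ih =>
    intro hin
    have hi : i < n := by omega
    have h1 : (V (2 * i + 1)).card ≤ (V (2 * i)).card := by
      rcases hodd i hi with h | h
      · rw [h]
      · have := h.2; omega
    have h2 : (V (2 * i + 2)).card ≤ (V (2 * i + 1)).card + 1 := by
      rcases heven i hi with h | h
      · rw [h]; omega
      · have := h.2; omega
    have h3 := ih (by omega)
    have : 2 * (i + 1) = 2 * i + 2 := by omega
    rw [this]
    omega

lemma vacTab_card_le {n : ℕ} {lam : YoungDiagram} {V : ℕ → YoungDiagram}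
    (hV : IsVacTab n lam V) : ∀ k, (V k).card ≤ n := by
  intro k
  rcases le_or_gt k (2 * n) with hk | hk
  · rcases Nat.even_or_odd k with ⟨i, hi⟩ | ⟨i, hi⟩
    · have hin : i ≤ n := by omega
      have := vacTab_card_even hV i hin
      have h2 : 2 * i = k := by omega
      rw [h2] at this; omega
    · have hi' : i < n := by omega
      have h1 : (V (2 * i + 1)).card ≤ (V (2 * i)).card := by
        rcases hV.2.2.2.1 i hi' with h | h
        · rw [h]
        · have := h.2; omega
      have h2 := vacTab_card_even hV i (by omega)
      have h3 : 2 * i + 1 = k := by omega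
      rw [h3] at h1
      omega
  · have h4 := hV.2.2.1 k (by omega)
    have h5 := hV.2.2.1 (2 * n) le_rfl
    rw [h4]
    have := vacTab_card_even hV n le_rfl
    rw [h5] at this
    exact this

lemma g_card_eq_zero {n : ℕ} {lam : YoungDiagram} (h : n < lam.card) :
    IsEmpty {V : ℕ → YoungDiagram // IsVacTab n lam V} := by
  constructor
  rintro ⟨V, hV⟩
  have := vacTab_card_le hV (2 * n)
  rw [hV.2.1] at this
  omega

instance vacTab_finite (n : ℕ) (lam : YoungDiagram) :
    Finite {V : ℕ → YoungDiagram // IsVacTab n lam V} := by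
  have hcod : Finite {μ : YoungDiagram // μ.card ≤ n} := (finite_card_le n).to_subtype
  apply Finite.of_injective
    (fun W : {V : ℕ → YoungDiagram // IsVacTab n lam V} =>
      (fun k : Fin (2 * n + 1) => (⟨W.1 k, vacTab_card_le W.2 k⟩ : {μ : YoungDiagram // μ.card ≤ n})))
  rintro ⟨V, hV⟩ ⟨W, hW⟩ h
  ext k : 2
  rcases le_or_gt k (2 * n) with hk | hk
  · have := congrFun h ⟨k, by omega⟩
    exact Subtype.ext_iff.mp this
  · show V k = W k
    rw [hV.2.2.1 k (by omega), hW.2.2.1 k (by omega)]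

/-! ### Operators on the free module over Young's lattice -/

abbrev F := YoungDiagram →₀ ℕ

noncomputable def upv (μ : YoungDiagram) : F := ∑ ν ∈ covers μ, Finsupp.single ν 1
noncomputable def downv (μ : YoungDiagram) : F := ∑ σ ∈ lowers μ, Finsupp.single σ 1

noncomputable def Uop : F →ₗ[ℕ] F :=
  Finsupp.lsum ℕ fun μ => LinearMap.toSpanSingleton ℕ F (upv μ)
noncomputable def Dop : F →ₗ[ℕ] F :=
  Finsupp.lsum ℕ fun μ => LinearMap.toSpanSingleton ℕ F (downv μ)

lemma sum_single_apply (s : Finset YoungDiagram) (τ : YoungDiagram) :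
    (∑ ν ∈ s, Finsupp.single ν (1 : ℕ)) τ = if τ ∈ s then 1 else 0 := by
  rw [Finset.sum_apply']
  rw [Finset.sum_congr rfl (fun ν _ => Finsupp.single_apply)]
  exact Finset.sum_ite_eq' s τ (fun _ => 1)

lemma upv_apply (μ τ : YoungDiagram) : upv μ τ = if τ ∈ covers μ then 1 else 0 :=
  sum_single_apply _ _

lemma downv_apply (μ τ : YoungDiagram) : downv μ τ = if τ ∈ lowers μ then 1 else 0 :=
  sum_single_apply _ _

lemma covers_lowers_mem_iff {μ τ : YoungDiagram} : τ ∈ covers μ ↔ μ ∈ lowers τ := by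
  rw [mem_covers, mem_lowers]

lemma Uop_single (μ : YoungDiagram) (b : ℕ) : Uop (Finsupp.single μ b) = b • upv μ := by
  rw [Uop, Finsupp.lsum_single, LinearMap.toSpanSingleton_apply]

lemma Dop_single (μ : YoungDiagram) (b : ℕ) : Dop (Finsupp.single μ b) = b • downv μ := by
  rw [Dop, Finsupp.lsum_single, LinearMap.toSpanSingleton_apply]

lemma Uop_apply (u : F) (τ : YoungDiagram) : Uop u τ = ∑ σ ∈ lowers τ, u σ := by
  rw [Uop, Finsupp.lsum_apply]
  rw [Finsupp.sum_apply]
  have h1 : (u.sum fun μ b => (LinearMap.toSpanSingleton ℕ F (upv μ) b) τ)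
      = ∑ μ ∈ u.support, u μ * (if μ ∈ lowers τ then 1 else 0) := by
    rw [Finsupp.sum]
    apply Finset.sum_congr rfl
    intro μ _
    rw [LinearMap.toSpanSingleton_apply, Finsupp.smul_apply, upv_apply, smul_eq_mul]
    congr 1
    exact if_congr covers_lowers_mem_iff rfl rfl
  rw [h1]
  rw [Finset.sum_congr rfl (fun μ _ => mul_ite (μ ∈ lowers τ) (u μ) 1 0)]
  simp only [mul_one, mul_zero]
  rw [Finset.sum_ite_mem]
  apply Finset.sum_subset (Finset.inter_subset_right)
  intro σ hσ hσn
  rw [Finset.mem_inter] at hσn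
  have : σ ∉ u.support := fun hc => (hσn ⟨hc, hσ⟩)
  exact Finsupp.notMem_support_iff.mp this

lemma Dop_apply (u : F) (τ : YoungDiagram) : Dop u τ = ∑ ν ∈ covers τ, u ν := by
  rw [Dop, Finsupp.lsum_apply]
  rw [Finsupp.sum_apply]
  have h1 : (u.sum fun μ b => (LinearMap.toSpanSingleton ℕ F (downv μ) b) τ)
      = ∑ μ ∈ u.support, u μ * (if μ ∈ covers τ then 1 else 0) := by
    rw [Finsupp.sum]
    apply Finset.sum_congr rfl
    intro μ _
    rw [LinearMap.toSpanSingleton_apply, Finsupp.smul_apply, downv_apply, smul_eq_mul]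
    congr 1
    exact if_congr covers_lowers_mem_iff.symm rfl rfl
  rw [h1]
  rw [Finset.sum_congr rfl (fun μ _ => mul_ite (μ ∈ covers τ) (u μ) 1 0)]
  simp only [mul_one, mul_zero]
  rw [Finset.sum_ite_mem]
  apply Finset.sum_subset (Finset.inter_subset_right)
  intro σ hσ hσn
  rw [Finset.mem_inter] at hσn
  have : σ ∉ u.support := fun hc => (hσn ⟨hc, hσ⟩)
  exact Finsupp.notMem_support_iff.mp this

lemma sum_ite_mem_card (s t : Finset YoungDiagram) :
    ∑ ν ∈ s, (if ν ∈ t then (1:ℕ) else 0) = (s ∩ t).card := by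
  rw [← Finset.filter_mem_eq_inter, Finset.card_filter]

lemma Dop_upv (μ τ : YoungDiagram) : Dop (upv μ) τ = (covers τ ∩ covers μ).card := by
  rw [Dop_apply]
  rw [Finset.sum_congr rfl (fun ν _ => upv_apply μ ν)]
  exact sum_ite_mem_card _ _

lemma Uop_downv (μ τ : YoungDiagram) : Uop (downv μ) τ = (lowers τ ∩ lowers μ).card := by
  rw [Uop_apply]
  rw [Finset.sum_congr rfl (fun σ _ => downv_apply μ σ)]
  exact sum_ite_mem_card _ _

lemma key_card (μ τ : YoungDiagram) :
    ((covers τ ∩ covers μ).card : ℕ)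
      = (lowers τ ∩ lowers μ).card + (if μ = τ then 1 else 0) := by
  by_cases h : μ = τ
  · subst h
    rw [if_pos rfl, Finset.inter_self, Finset.inter_self, card_covers_eq]
  · rw [if_neg h, add_zero]
    exact inter_covers_card (fun hc => h hc.symm)

/-- Young's lattice is a differential poset: `DU = UD + 1`. -/
lemma weyl : Dop ∘ₗ Uop = Uop ∘ₗ Dop + LinearMap.id := by
  apply Finsupp.lhom_ext
  intro μ b
  apply Finsupp.ext
  intro τ
  simp only [LinearMap.comp_apply, LinearMap.add_apply, LinearMap.id_apply]
  rw [Uop_single, map_nsmul, Dop_single, map_nsmul]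
  simp only [Finsupp.add_apply, Finsupp.smul_apply, Finsupp.single_apply, smul_eq_mul]
  rw [Dop_upv, Uop_downv, key_card μ τ]
  by_cases h : μ = τ
  · rw [if_pos h, if_pos h]; ring
  · rw [if_neg h, if_neg h]; ring

/-! ### The transfer operators and the Bell recurrence -/

noncomputable def Xop : Module.End ℕ F := 1 + Uop
noncomputable def Yop : Module.End ℕ F := 1 + Dop

lemma weyl' : (Dop * Uop : Module.End ℕ F) = Uop * Dop + 1 := by
  have := weyl
  rw [Module.End.mul_eq_comp, Module.End.mul_eq_comp]
  rw [this]
  rfl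

lemma yx_rel : Yop * Xop = Xop * Yop + 1 := by
  rw [Yop, Xop]
  simp only [add_mul, mul_add, one_mul, mul_one]
  rw [weyl']
  abel

noncomputable def phi : Module.End ℕ F →+ ℕ where
  toFun T := T (Finsupp.single ⊥ 1) ⊥
  map_zero' := rfl
  map_add' S T := by
    simp only [LinearMap.add_apply, Finsupp.add_apply]

lemma lowers_bot : lowers (⊥ : YoungDiagram) = ∅ := by
  apply Finset.eq_empty_of_forall_notMem
  intro σ hσ
  rw [mem_lowers] at hσ
  have := hσ.2
  simp only [YoungDiagram.card] at this
  rw [YoungDiagram.cells_bot] at this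
  simp at this

lemma Uop_apply_bot (v : F) : Uop v ⊥ = 0 := by
  rw [Uop_apply, lowers_bot, Finset.sum_empty]

lemma Dop_bot : Dop (Finsupp.single ⊥ 1) = 0 := by
  rw [Dop_single, downv, lowers_bot, Finset.sum_empty, smul_zero]

lemma phi_one : phi 1 = 1 := by
  show (LinearMap.id (R := ℕ) (M := F)) (Finsupp.single ⊥ 1) ⊥ = 1
  rw [LinearMap.id_apply, Finsupp.single_eq_same]

lemma phi_X_mul (T : Module.End ℕ F) : phi (Xop * T) = phi T := by
  show ((Xop * T) (Finsupp.single ⊥ 1)) ⊥ = (T (Finsupp.single ⊥ 1)) ⊥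
  rw [Module.End.mul_eq_comp, LinearMap.comp_apply, Xop, LinearMap.add_apply]
  rw [Finsupp.add_apply, Module.End.one_apply, Uop_apply_bot, add_zero]

lemma phi_mul_Y (T : Module.End ℕ F) : phi (T * Yop) = phi T := by
  show ((T * Yop) (Finsupp.single ⊥ 1)) ⊥ = (T (Finsupp.single ⊥ 1)) ⊥
  rw [Module.End.mul_eq_comp, LinearMap.comp_apply, Yop, LinearMap.add_apply]
  rw [Module.End.one_apply, Dop_bot, add_zero]

lemma pow_shift (n : ℕ) : (Xop * Yop) ^ (n + 1) = Xop * ((Yop * Xop) ^ n * Yop) := by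
  induction n with
  | zero => simp
  | succ n ih =>
    rw [pow_succ', ih, pow_succ']
    simp only [mul_assoc]

/-- Walk counts from the transfer operator. -/
noncomputable def wcount (n : ℕ) : ℕ := phi ((Xop * Yop) ^ n)

lemma wcount_zero : wcount 0 = 1 := by
  rw [wcount, pow_zero, phi_one]

lemma phi_mul_natCast (T : Module.End ℕ F) (c : ℕ) : phi (T * (c : Module.End ℕ F)) = c * phi T := by
  have h1 : (c : Module.End ℕ F) = c • 1 := by
    rw [nsmul_eq_mul, mul_one]
  rw [h1, mul_smul_comm, mul_one, map_nsmul, smul_eq_mul]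

lemma wcount_succ (n : ℕ) :
    wcount (n + 1) = ∑ k ∈ Finset.range (n + 1), n.choose k * wcount k := by
  rw [wcount, pow_shift, phi_X_mul, phi_mul_Y, yx_rel]
  rw [(Commute.one_right (Xop * Yop)).add_pow n]
  rw [map_sum]
  apply Finset.sum_congr rfl
  intro k _
  rw [one_pow, mul_one, phi_mul_natCast, wcount]

/-! ### Counting vacillating tableaux -/

open Classical in
lemma card_fiber_sum {A : Type*} [Finite A] {β : Type*} (S : Finset β) (f : A → β)
    (hf : ∀ a, f a ∈ S) : Nat.card A = ∑ b ∈ S, Nat.card {a : A // f a = b} := by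
  classical
  have : Fintype A := Fintype.ofFinite A
  rw [Nat.card_eq_fintype_card, ← Finset.card_univ,
    Finset.card_eq_sum_card_fiberwise (s := Finset.univ) (t := S) (fun a _ => hf a)]
  apply Finset.sum_congr rfl
  intro b _
  rw [Nat.card_eq_fintype_card, Fintype.card_subtype]

lemma g_zero (μ : YoungDiagram) : g μ 0 = if ⊥ = μ then 1 else 0 := by
  by_cases h : (⊥ : YoungDiagram) = μ
  · subst h
    rw [if_pos rfl, g]
    have hU : Unique {V : ℕ → YoungDiagram // IsVacTab 0 ⊥ V} := by
      refine ⟨⟨⟨fun _ => ⊥, rfl, rfl, fun _ _ => rfl, fun i hi => by omega, fun i hi => by omega⟩⟩, ?_⟩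
      rintro ⟨V, hV⟩
      have h' : ∀ k, V k = ⊥ := fun k => hV.2.2.1 k (by omega)
      exact Subtype.ext (funext fun k => h' k)
    exact Nat.card_eq_one_iff_unique.mpr ⟨hU.instSubsingleton, ⟨hU.default⟩⟩
  · rw [if_neg h, g]
    have : IsEmpty {V : ℕ → YoungDiagram // IsVacTab 0 μ V} := by
      constructor
      rintro ⟨V, hV⟩
      exact h (hV.1.symm.trans hV.2.1)
    exact Nat.card_of_isEmpty

def truncate (n : ℕ) (V : ℕ → YoungDiagram) : ℕ → YoungDiagram := fun k => V (min k (2 * n))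

lemma truncate_isVacTab {n : ℕ} {μ : YoungDiagram} {V : ℕ → YoungDiagram}
    (hV : IsVacTab (n + 1) μ V) : IsVacTab n (V (2 * n)) (truncate n V) := by
  obtain ⟨h0, h2n, hstab, hodd, heven⟩ := hV
  refine ⟨?_, ?_, ?_, ?_, ?_⟩
  · show V (min 0 (2 * n)) = ⊥
    rw [Nat.min_def]
    simp only [Nat.zero_le, if_pos]
    exact h0
  · show V (min (2 * n) (2 * n)) = V (2 * n)
    rw [min_self]
  · intro k hk
    show V (min k (2 * n)) = V (2 * n)
    rw [min_eq_right hk]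
  · intro i hi
    have e1 : min (2 * i + 1) (2 * n) = 2 * i + 1 := by omega
    have e2 : min (2 * i) (2 * n) = 2 * i := by omega
    show V (min (2 * i + 1) (2 * n)) = V (min (2 * i) (2 * n)) ∨
      AddOne (V (min (2 * i + 1) (2 * n))) (V (min (2 * i) (2 * n)))
    rw [e1, e2]
    exact hodd i (by omega)
  · intro i hi
    have e1 : min (2 * i + 1) (2 * n) = 2 * i + 1 := by omega
    have e2 : min (2 * i + 2) (2 * n) = 2 * i + 2 := by omega
    show V (min (2 * i + 2) (2 * n)) = V (min (2 * i + 1) (2 * n)) ∨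
      AddOne (V (min (2 * i + 1) (2 * n))) (V (min (2 * i + 2) (2 * n)))
    rw [e1, e2]
    exact heven i (by omega)

def extendV (n : ℕ) (μ ρ : YoungDiagram) (V : ℕ → YoungDiagram) : ℕ → YoungDiagram :=
  fun k => if k ≤ 2 * n then V k else if k = 2 * n + 1 then ρ else μ

lemma extendV_isVacTab {n : ℕ} {μ ρ ν : YoungDiagram} {V : ℕ → YoungDiagram}
    (hV : IsVacTab n ν V) (hρ : ρ = μ ∨ AddOne ρ μ) (hν : ν = ρ ∨ AddOne ρ ν) :
    IsVacTab (n + 1) μ (extendV n μ ρ V) := by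
  obtain ⟨h0, h2n, hstab, hodd, heven⟩ := hV
  have hE0 : ∀ k, k ≤ 2 * n → extendV n μ ρ V k = V k := by
    intro k hk; rw [extendV, if_pos hk]
  have hE1 : extendV n μ ρ V (2 * n + 1) = ρ := by
    rw [extendV, if_neg (by omega), if_pos rfl]
  have hE2 : ∀ k, 2 * n + 2 ≤ k → extendV n μ ρ V k = μ := by
    intro k hk; rw [extendV, if_neg (by omega), if_neg (by omega)]
  refine ⟨?_, ?_, ?_, ?_, ?_⟩
  · rw [hE0 0 (by omega)]; exact h0
  · rw [hE2 (2 * (n + 1)) (by omega)]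
  · intro k hk; rw [hE2 k (by omega)]
  · intro i hi
    rcases Nat.lt_or_ge i n with h | h
    · rw [hE0 (2 * i + 1) (by omega), hE0 (2 * i) (by omega)]
      exact hodd i h
    · have hieq : i = n := by omega
      subst hieq
      rw [hE1, hE0 (2 * i) (by omega), h2n]
      rcases hν with h' | h'
      · exact Or.inl h'.symm
      · exact Or.inr h'
  · intro i hi
    rcases Nat.lt_or_ge i n with h | h
    · rw [hE0 (2 * i + 2) (by omega), hE0 (2 * i + 1) (by omega)]
      exact heven i h
    · have hieq : i = n := by omega
      subst hieq
      rw [hE1, hE2 (2 * i + 2) (by omega)]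
      rcases hρ with h' | h'
      · exact Or.inl h'.symm
      · exact Or.inr h'

lemma not_mem_lowers_self (μ : YoungDiagram) : μ ∉ lowers μ := by
  rw [mem_lowers]
  rintro ⟨-, h⟩
  omega

lemma not_mem_covers_self (ρ : YoungDiagram) : ρ ∉ covers ρ := by
  rw [mem_covers]
  rintro ⟨-, h⟩
  omega

noncomputable def stepEquiv (n : ℕ) (μ ρ ν : YoungDiagram)
    (hρ : ρ = μ ∨ AddOne ρ μ) (hν : ν = ρ ∨ AddOne ρ ν) :
    {W : {W' : {V : ℕ → YoungDiagram // IsVacTab (n + 1) μ V} // W'.1 (2 * n + 1) = ρ} //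
        W.1.1 (2 * n) = ν} ≃ {V : ℕ → YoungDiagram // IsVacTab n ν V} where
  toFun W := ⟨truncate n W.1.1.1, by
    have h := truncate_isVacTab W.1.1.2
    rwa [W.2] at h⟩
  invFun V := ⟨⟨⟨extendV n μ ρ V.1, extendV_isVacTab V.2 hρ hν⟩, by
      show extendV n μ ρ V.1 (2 * n + 1) = ρ
      rw [extendV]
      simp only [if_neg (by omega : ¬ (2 * n + 1 ≤ 2 * n)), if_pos rfl]
      simp⟩, by
      show extendV n μ ρ V.1 (2 * n) = ν
      rw [extendV, if_pos (by omega)]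
      exact V.2.2.1⟩
  left_inv W := by
    apply Subtype.ext
    apply Subtype.ext
    apply Subtype.ext
    funext k
    show extendV n μ ρ (truncate n W.1.1.1) k = W.1.1.1 k
    rcases le_or_gt k (2 * n) with hk | hk
    · rw [extendV, if_pos hk]
      show W.1.1.1 (min k (2 * n)) = W.1.1.1 k
      rw [min_eq_left hk]
    · rcases eq_or_lt_of_le (Nat.succ_le_of_lt hk) with heq | hlt
      · rw [extendV, if_neg (by omega), if_pos (by omega)]
        rw [← heq] at *
        exact W.1.2.symm
      · rw [extendV, if_neg (by omega), if_neg (by omega)]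
        exact (W.1.1.2.2.2.1 k (by omega)).symm
  right_inv V := by
    apply Subtype.ext
    funext k
    show extendV n μ ρ V.1 (min k (2 * n)) = V.1 k
    rw [extendV, if_pos (min_le_right _ _)]
    rcases le_or_gt k (2 * n) with hk | hk
    · rw [min_eq_left hk]
    · rw [min_eq_right (by omega)]
      rw [V.2.2.1, V.2.2.2.1 k (by omega)]

lemma g_succ (n : ℕ) (μ : YoungDiagram) :
    g μ (n + 1) = ∑ ρ ∈ insert μ (lowers μ), ∑ ν ∈ insert ρ (covers ρ), g ν n := by
  rw [g, card_fiber_sum (insert μ (lowers μ))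
    (fun W : {V : ℕ → YoungDiagram // IsVacTab (n + 1) μ V} => W.1 (2 * n + 1))
    (fun W => by
      rw [Finset.mem_insert, mem_lowers]
      have h1 := W.2.2.2.2.2 n (by omega)
      have h2 : W.1 (2 * n + 2) = μ := W.2.2.2.1 (2 * n + 2) (by omega)
      rw [h2] at h1
      rcases h1 with h | h
      · exact Or.inl h.symm
      · exact Or.inr h)]
  apply Finset.sum_congr rfl
  intro ρ hρmem
  have hρ : ρ = μ ∨ AddOne ρ μ := by
    rcases Finset.mem_insert.mp hρmem with h | h
    · exact Or.inl h
    · exact Or.inr (mem_lowers.mp h)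
  rw [card_fiber_sum (insert ρ (covers ρ))
    (fun W : {W' : {V : ℕ → YoungDiagram // IsVacTab (n + 1) μ V} // W'.1 (2 * n + 1) = ρ} =>
      W.1.1 (2 * n))
    (fun W => by
      rw [Finset.mem_insert, mem_covers]
      have h1 := W.1.2.2.2.2.1 n (by omega)
      rw [W.2] at h1
      rcases h1 with h | h
      · exact Or.inl h.symm
      · exact Or.inr h)]
  apply Finset.sum_congr rfl
  intro ν hνmem
  have hν : ν = ρ ∨ AddOne ρ ν := by
    rcases Finset.mem_insert.mp hνmem with h | h
    · exact Or.inl h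
    · exact Or.inr (mem_covers.mp h)
  rw [g]
  exact Nat.card_congr (stepEquiv n μ ρ ν hρ hν)

lemma XY_apply (u : F) (μ : YoungDiagram) :
    ((Xop * Yop) u) μ = ∑ ρ ∈ insert μ (lowers μ), ∑ ν ∈ insert ρ (covers ρ), u ν := by
  rw [Module.End.mul_apply]
  have hX : ∀ w : F, (Xop w) μ = ∑ ρ ∈ insert μ (lowers μ), w ρ := by
    intro w
    rw [Xop, LinearMap.add_apply, Finsupp.add_apply, Module.End.one_apply, Uop_apply,
      Finset.sum_insert (not_mem_lowers_self μ)]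
  rw [hX]
  apply Finset.sum_congr rfl
  intro ρ _
  rw [Yop, LinearMap.add_apply, Finsupp.add_apply, Module.End.one_apply, Dop_apply,
    Finset.sum_insert (not_mem_covers_self ρ)]

lemma vec_eq (n : ℕ) (μ : YoungDiagram) :
    (((Xop * Yop) ^ n) (Finsupp.single ⊥ 1)) μ = g μ n := by
  induction n generalizing μ with
  | zero =>
    rw [pow_zero, g_zero]
    show (Finsupp.single (⊥ : YoungDiagram) (1 : ℕ)) μ = _
    rw [Finsupp.single_apply]
  | succ n ih =>
    rw [pow_succ', Module.End.mul_apply, XY_apply, g_succ]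
    exact Finset.sum_congr rfl fun ρ _ => Finset.sum_congr rfl fun ν _ => ih ν

lemma wcount_eq_g (n : ℕ) : wcount n = g ⊥ n := vec_eq n ⊥

/-! ### Splitting a closed walk at the midpoint -/

lemma truncate_isVacTabN {N n : ℕ} {μ : YoungDiagram} {V : ℕ → YoungDiagram}
    (hV : IsVacTab N μ V) (hn : n ≤ N) : IsVacTab n (V (2 * n)) (truncate n V) := by
  obtain ⟨h0, h2n, hstab, hodd, heven⟩ := hV
  refine ⟨?_, ?_, ?_, ?_, ?_⟩
  · show V (min 0 (2 * n)) = ⊥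
    rw [min_eq_left (by omega)]
    exact h0
  · show V (min (2 * n) (2 * n)) = V (2 * n)
    rw [min_self]
  · intro k hk
    show V (min k (2 * n)) = V (2 * n)
    rw [min_eq_right hk]
  · intro i hi
    have e1 : min (2 * i + 1) (2 * n) = 2 * i + 1 := by omega
    have e2 : min (2 * i) (2 * n) = 2 * i := by omega
    show V (min (2 * i + 1) (2 * n)) = V (min (2 * i) (2 * n)) ∨
      AddOne (V (min (2 * i + 1) (2 * n))) (V (min (2 * i) (2 * n)))
    rw [e1, e2]
    exact hodd i (by omega)
  · intro i hi
    have e1 : min (2 * i + 1) (2 * n) = 2 * i + 1 := by omega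
    have e2 : min (2 * i + 2) (2 * n) = 2 * i + 2 := by omega
    show V (min (2 * i + 2) (2 * n)) = V (min (2 * i + 1) (2 * n)) ∨
      AddOne (V (min (2 * i + 1) (2 * n))) (V (min (2 * i + 2) (2 * n)))
    rw [e1, e2]
    exact heven i (by omega)

def revV (n m : ℕ) (V : ℕ → YoungDiagram) : ℕ → YoungDiagram :=
  fun k => V (2 * (n + m) - min k (2 * m))

def glueV (n m : ℕ) (V₁ V₂ : ℕ → YoungDiagram) : ℕ → YoungDiagram :=
  fun k => if k ≤ 2 * n then V₁ k else V₂ (2 * (n + m) - k)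

lemma revV_isVacTab {n m : ℕ} {V : ℕ → YoungDiagram}
    (hV : IsVacTab (n + m) ⊥ V) : IsVacTab m (V (2 * n)) (revV n m V) := by
  obtain ⟨h0, h2n, hstab, hodd, heven⟩ := hV
  refine ⟨?_, ?_, ?_, ?_, ?_⟩
  · show V (2 * (n + m) - min 0 (2 * m)) = ⊥
    rw [min_eq_left (by omega)]
    have e : 2 * (n + m) - 0 = 2 * (n + m) := by omega
    rw [e]
    exact h2n
  · show V (2 * (n + m) - min (2 * m) (2 * m)) = V (2 * n)
    rw [min_self]
    have e : 2 * (n + m) - 2 * m = 2 * n := by omega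
    rw [e]
  · intro k hk
    show V (2 * (n + m) - min k (2 * m)) = V (2 * n)
    rw [min_eq_right hk]
    have e : 2 * (n + m) - 2 * m = 2 * n := by omega
    rw [e]
  · intro i hi
    have e1 : 2 * (n + m) - min (2 * i + 1) (2 * m) = 2 * (n + m - i - 1) + 1 := by omega
    have e2 : 2 * (n + m) - min (2 * i) (2 * m) = 2 * (n + m - i - 1) + 2 := by omega
    show V (2 * (n + m) - min (2 * i + 1) (2 * m)) = V (2 * (n + m) - min (2 * i) (2 * m)) ∨
      AddOne (V (2 * (n + m) - min (2 * i + 1) (2 * m))) (V (2 * (n + m) - min (2 * i) (2 * m)))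
    rw [e1, e2]
    rcases heven (n + m - i - 1) (by omega) with h | h
    · exact Or.inl h.symm
    · exact Or.inr h
  · intro i hi
    have e1 : 2 * (n + m) - min (2 * i + 1) (2 * m) = 2 * (n + m - i - 1) + 1 := by omega
    have e2 : 2 * (n + m) - min (2 * i + 2) (2 * m) = 2 * (n + m - i - 1) := by omega
    show V (2 * (n + m) - min (2 * i + 2) (2 * m)) = V (2 * (n + m) - min (2 * i + 1) (2 * m)) ∨
      AddOne (V (2 * (n + m) - min (2 * i + 1) (2 * m))) (V (2 * (n + m) - min (2 * i + 2) (2 * m)))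
    rw [e1, e2]
    rcases hodd (n + m - i - 1) (by omega) with h | h
    · exact Or.inl h.symm
    · exact Or.inr h

lemma glueV_isVacTab {n m : ℕ} {lam : YoungDiagram} {V₁ V₂ : ℕ → YoungDiagram}
    (h1 : IsVacTab n lam V₁) (h2 : IsVacTab m lam V₂) :
    IsVacTab (n + m) ⊥ (glueV n m V₁ V₂) := by
  obtain ⟨h10, h12n, h1stab, h1odd, h1even⟩ := h1
  obtain ⟨h20, h22n, h2stab, h2odd, h2even⟩ := h2
  have hglue_hi : ∀ i, n ≤ i → i ≤ n + m → glueV n m V₁ V₂ (2 * i) = V₂ (2 * (n + m) - 2 * i) := by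
    intro i hni him
    rcases eq_or_lt_of_le hni with heq | hlt
    · rw [glueV, if_pos (by omega)]
      have e : 2 * (n + m) - 2 * i = 2 * m := by omega
      have e2 : 2 * i = 2 * n := by omega
      rw [e, e2, h12n, h22n]
    · rw [glueV, if_neg (by omega)]
  refine ⟨?_, ?_, ?_, ?_, ?_⟩
  · show (if 0 ≤ 2 * n then V₁ 0 else V₂ (2 * (n + m) - 0)) = ⊥
    rw [if_pos (by omega)]
    exact h10
  · have := hglue_hi (n + m) (by omega) le_rfl
    rw [this]
    have e : 2 * (n + m) - 2 * (n + m) = 0 := by omega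
    rw [e, h20]
  · intro k hk
    show (if k ≤ 2 * n then V₁ k else V₂ (2 * (n + m) - k)) = ⊥
    rcases le_or_gt k (2 * n) with hkn | hkn
    · rw [if_pos hkn]
      have hk2n : k = 2 * n := by omega
      have hm0 : m = 0 := by omega
      subst hk2n
      rw [h12n, ← h22n]
      have e : 2 * m = 0 := by omega
      rw [e, h20]
    · rw [if_neg (by omega)]
      have e : 2 * (n + m) - k = 0 := by omega
      rw [e, h20]
  · intro i hi
    rcases Nat.lt_or_ge i n with h | h
    · show (if 2 * i + 1 ≤ 2 * n then V₁ (2 * i + 1) else _) = (if 2 * i ≤ 2 * n then V₁ (2 * i) else _) ∨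
        AddOne (if 2 * i + 1 ≤ 2 * n then V₁ (2 * i + 1) else _) (if 2 * i ≤ 2 * n then V₁ (2 * i) else _)
      rw [if_pos (by omega), if_pos (by omega)]
      exact h1odd i h
    · have e0 := hglue_hi i h (by omega)
      have e1 : glueV n m V₁ V₂ (2 * i + 1) = V₂ (2 * (n + m - i - 1) + 1) := by
        rw [glueV, if_neg (by omega)]
        have e : 2 * (n + m) - (2 * i + 1) = 2 * (n + m - i - 1) + 1 := by omega
        rw [e]
      have e2 : 2 * (n + m) - 2 * i = 2 * (n + m - i - 1) + 2 := by omega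
      rw [e0, e1, e2]
      rcases h2even (n + m - i - 1) (by omega) with h' | h'
      · exact Or.inl h'.symm
      · exact Or.inr h'
  · intro i hi
    rcases Nat.lt_or_ge i n with h | h
    · show (if 2 * i + 2 ≤ 2 * n then V₁ (2 * i + 2) else _) = (if 2 * i + 1 ≤ 2 * n then V₁ (2 * i + 1) else _) ∨
        AddOne (if 2 * i + 1 ≤ 2 * n then V₁ (2 * i + 1) else _) (if 2 * i + 2 ≤ 2 * n then V₁ (2 * i + 2) else _)
      rw [if_pos (by omega), if_pos (by omega)]
      exact h1even i h
    · have e1 : glueV n m V₁ V₂ (2 * i + 1) = V₂ (2 * (n + m - i - 1) + 1) := by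
        rw [glueV, if_neg (by omega)]
        have e : 2 * (n + m) - (2 * i + 1) = 2 * (n + m - i - 1) + 1 := by omega
        rw [e]
      have e2 : glueV n m V₁ V₂ (2 * i + 2) = V₂ (2 * (n + m - i - 1)) := by
        rw [glueV, if_neg (by omega)]
        have e : 2 * (n + m) - (2 * i + 2) = 2 * (n + m - i - 1) := by omega
        rw [e]
      rw [e1, e2]
      rcases h2odd (n + m - i - 1) (by omega) with h' | h'
      · exact Or.inl h'.symm
      · exact Or.inr h'

noncomputable def splitEquiv (n m : ℕ) (lam : YoungDiagram) :
    {W : {V : ℕ → YoungDiagram // IsVacTab (n + m) ⊥ V} // W.1 (2 * n) = lam} ≃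
      ({V : ℕ → YoungDiagram // IsVacTab n lam V} ×
        {V : ℕ → YoungDiagram // IsVacTab m lam V}) where
  toFun W := (⟨truncate n W.1.1, by
      have h := truncate_isVacTabN W.1.2 (by omega : n ≤ n + m)
      rwa [W.2] at h⟩,
    ⟨revV n m W.1.1, by
      have h := revV_isVacTab W.1.2
      rwa [W.2] at h⟩)
  invFun P := ⟨⟨glueV n m P.1.1 P.2.1, glueV_isVacTab P.1.2 P.2.2⟩, by
      show (if 2 * n ≤ 2 * n then P.1.1 (2 * n) else P.2.1 (2 * (n + m) - 2 * n)) = lam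
      rw [if_pos le_rfl]
      exact P.1.2.2.1⟩
  left_inv W := by
    apply Subtype.ext
    apply Subtype.ext
    funext k
    show glueV n m (truncate n W.1.1) (revV n m W.1.1) k = W.1.1 k
    rcases le_or_gt k (2 * n) with hk | hk
    · rw [glueV, if_pos hk]
      show W.1.1 (min k (2 * n)) = W.1.1 k
      rw [min_eq_left hk]
    · rw [glueV, if_neg (by omega)]
      show W.1.1 (2 * (n + m) - min (2 * (n + m) - k) (2 * m)) = W.1.1 k
      rcases le_or_gt k (2 * (n + m)) with hk2 | hk2
      · have e : min (2 * (n + m) - k) (2 * m) = 2 * (n + m) - k := by omega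
        rw [e]
        have e2 : 2 * (n + m) - (2 * (n + m) - k) = k := by omega
        rw [e2]
      · have e : min (2 * (n + m) - k) (2 * m) = 0 := by omega
        rw [e]
        have e3 : 2 * (n + m) - 0 = 2 * (n + m) := by omega
        rw [e3]
        rw [W.1.2.2.1, W.1.2.2.2.1 k (by omega)]
  right_inv P := by
    apply Prod.ext
    · apply Subtype.ext
      funext k
      show glueV n m P.1.1 P.2.1 (min k (2 * n)) = P.1.1 k
      rw [glueV]
      rw [if_pos (min_le_right _ _)]
      rcases le_or_gt k (2 * n) with hk | hk
      · rw [min_eq_left hk]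
      · rw [min_eq_right (by omega), P.1.2.2.1, P.1.2.2.2.1 k (by omega)]
    · apply Subtype.ext
      funext k
      show glueV n m P.1.1 P.2.1 (2 * (n + m) - min k (2 * m)) = P.2.1 k
      rcases le_or_gt (2 * m) k with hk | hk
      · have e : min k (2 * m) = 2 * m := by omega
        rw [e, glueV, if_pos (by omega)]
        have e2 : 2 * (n + m) - 2 * m = 2 * n := by omega
        rw [e2, P.1.2.2.1, P.2.2.2.2.1 k hk]
      · have e : min k (2 * m) = k := by omega
        rw [e, glueV, if_neg (by omega)]
        have e2 : 2 * (n + m) - (2 * (n + m) - k) = k := by omega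
        rw [e2]

lemma sum_g_eq (n m : ℕ) :
    ∑ᶠ lam : YoungDiagram, g lam n * g lam m = g ⊥ (n + m) := by
  classical
  have hsupp : (Function.support fun lam => g lam n * g lam m) ⊆
      ↑(finite_card_le n).toFinset := by
    intro lam hlam
    rw [Finset.mem_coe, Set.Finite.mem_toFinset]
    by_contra hc
    simp only [Set.mem_setOf_eq, not_le] at hc
    have : IsEmpty {V : ℕ → YoungDiagram // IsVacTab n lam V} := g_card_eq_zero hc
    have hz : g lam n = 0 := by rw [g]; exact Nat.card_of_isEmpty
    rw [Function.mem_support] at hlam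
    rw [hz, zero_mul] at hlam
    exact hlam rfl
  rw [finsum_eq_finset_sum_of_support_subset _ hsupp]
  have hsum := card_fiber_sum (A := {V : ℕ → YoungDiagram // IsVacTab (n + m) ⊥ V})
    (finite_card_le n).toFinset (fun W => W.1 (2 * n))
    (fun W => by
      rw [Set.Finite.mem_toFinset]
      exact vacTab_card_even W.2 n (by omega))
  rw [g, hsum]
  apply Finset.sum_congr rfl
  intro lam _
  rw [Nat.card_congr (splitEquiv n m lam), Nat.card_prod]
  rfl

/-! ### Counting finpartitions: the Bell recurrence -/

section Bell

variable {α : Type*} [DecidableEq α]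

def delPart {a : α} {s : Finset α} (ha : a ∉ s) (t : Finset α)
    (P : Finpartition (insert a s)) (hP : P.part a \ {a} = t) : Finpartition (s \ t) where
  parts := P.parts.erase (P.part a)
  supIndep := P.supIndep.subset (Finset.erase_subset _ _)
  sup_parts := by
    ext x
    rw [Finset.sup_eq_biUnion, Finset.mem_biUnion]
    constructor
    · rintro ⟨p, hp, hxp⟩
      rw [Finset.mem_erase] at hp
      have hxg : x ∈ insert a s := P.le hp.2 hxp
      have hxpa : x ∉ P.part a := by
        intro hx
        exact hp.1 (P.eq_of_mem_parts hp.2 (P.part_mem.mpr (Finset.mem_insert_self a s)) hxp hx)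
      rw [Finset.mem_sdiff]
      constructor
      · rcases Finset.mem_insert.mp hxg with rfl | h
        · exact absurd (P.mem_part_self.mpr (Finset.mem_insert_self x s)) hxpa
        · exact h
      · rw [← hP]
        intro hx
        exact hxpa (Finset.mem_sdiff.mp hx).1
    · intro hx
      rw [Finset.mem_sdiff] at hx
      have hxg : x ∈ insert a s := Finset.mem_insert_of_mem hx.1
      obtain ⟨p, hp, hxp⟩ := P.exists_mem hxg
      refine ⟨p, Finset.mem_erase.mpr ⟨?_, hp⟩, hxp⟩
      intro hpa
      apply hx.2
      rw [← hP, Finset.mem_sdiff, Finset.mem_singleton]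
      refine ⟨hpa ▸ hxp, ?_⟩
      rintro rfl
      exact ha hx.1
  bot_notMem := fun h => P.bot_notMem (Finset.mem_of_mem_erase h)

def addPart {a : α} {s : Finset α} (ha : a ∉ s) {t : Finset α} (hts : t ⊆ s)
    (Q : Finpartition (s \ t)) : Finpartition (insert a s) where
  parts := insert (insert a t) Q.parts
  supIndep := by
    rw [Finset.supIndep_iff_pairwiseDisjoint, Finset.coe_insert]
    apply Set.PairwiseDisjoint.insert Q.disjoint
    intro q hq _
    rw [Finset.disjoint_left]
    intro x hx hxq
    have hq' : x ∈ s \ t := Q.le hq hxq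
    rw [Finset.mem_sdiff] at hq'
    rcases Finset.mem_insert.mp hx with rfl | hxt
    · exact ha hq'.1
    · exact hq'.2 hxt
  sup_parts := by
    rw [Finset.sup_insert, Q.sup_parts]
    ext x
    show x ∈ insert a t ∪ (s \ t) ↔ x ∈ insert a s
    rw [Finset.mem_union, Finset.mem_insert, Finset.mem_insert, Finset.mem_sdiff]
    constructor
    · rintro ((rfl | h) | h)
      · exact Or.inl rfl
      · exact Or.inr (hts h)
      · exact Or.inr h.1
    · rintro (rfl | h)
      · exact Or.inl (Or.inl rfl)
      · by_cases hxt : x ∈ t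
        · exact Or.inl (Or.inr hxt)
        · exact Or.inr ⟨h, hxt⟩
  bot_notMem := by
    rw [Finset.mem_insert]
    rintro (h | h)
    · have : a ∈ (⊥ : Finset α) := h ▸ Finset.mem_insert_self a t
      simp at this
    · exact Q.bot_notMem h

lemma addPart_part {a : α} {s : Finset α} (ha : a ∉ s) {t : Finset α} (hts : t ⊆ s)
    (Q : Finpartition (s \ t)) : (addPart ha hts Q).part a = insert a t :=
  Finpartition.part_eq_of_mem _ (Finset.mem_insert_self _ _) (Finset.mem_insert_self _ _)

def fiberEquiv {a : α} {s : Finset α} (ha : a ∉ s) {t : Finset α} (hts : t ⊆ s) :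
    {P : Finpartition (insert a s) // P.part a \ {a} = t} ≃ Finpartition (s \ t) where
  toFun P := delPart ha t P.1 P.2
  invFun Q := ⟨addPart ha hts Q, by
    rw [addPart_part ha hts Q]
    ext x
    rw [Finset.mem_sdiff, Finset.mem_insert, Finset.mem_singleton]
    constructor
    · rintro ⟨rfl | h, hne⟩
      · exact absurd rfl hne
      · exact h
    · intro hx
      refine ⟨Or.inr hx, ?_⟩
      rintro rfl
      exact ha (hts hx)⟩
  left_inv P := by
    obtain ⟨P, hP⟩ := P
    subst hP
    apply Subtype.ext
    apply Finpartition.ext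
    show insert (insert a (P.part a \ {a})) ((P.parts).erase (P.part a)) = P.parts
    rw [Finset.sdiff_singleton_eq_erase,
      Finset.insert_erase (P.mem_part_self.mpr (Finset.mem_insert_self a s)),
      Finset.insert_erase (P.part_mem.mpr (Finset.mem_insert_self a s))]
  right_inv Q := by
    apply Finpartition.ext
    show (insert (insert a t) Q.parts).erase ((addPart ha hts Q).part a) = Q.parts
    rw [addPart_part ha hts Q]
    apply Finset.erase_insert
    intro hmem
    have := Q.le hmem (Finset.mem_insert_self a t)
    rw [Finset.mem_sdiff] at this
    exact ha (this.1)

lemma finpartition_rec (a : α) (s : Finset α) (ha : a ∉ s) :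
    Nat.card (Finpartition (insert a s)) =
      ∑ t ∈ s.powerset, Nat.card (Finpartition (s \ t)) := by
  rw [card_fiber_sum s.powerset (fun P : Finpartition (insert a s) => P.part a \ {a})
    (fun P => by
      rw [Finset.mem_powerset]
      intro x hx
      rw [Finset.mem_sdiff, Finset.mem_singleton] at hx
      have := P.le (P.part_mem.mpr (Finset.mem_insert_self a s)) hx.1
      rcases Finset.mem_insert.mp this with rfl | h
      · exact absurd rfl hx.2
      · exact h)]
  apply Finset.sum_congr rfl
  intro t ht
  exact Nat.card_congr (fiberEquiv ha (Finset.mem_powerset.mp ht))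

end Bell

noncomputable def BellF (N : ℕ) : ℕ := Nat.card (Finpartition (Finset.range N))

lemma BellF_zero : BellF 0 = 1 := by
  rw [BellF, Finset.range_zero]
  have : Unique (Finpartition (∅ : Finset ℕ)) :=
    inferInstanceAs (Unique (Finpartition (⊥ : Finset ℕ)))
  exact Nat.card_unique

lemma card_finpartition_eq_bellF : ∀ N, ∀ s : Finset ℕ, s.card = N →
    Nat.card (Finpartition s) = BellF N := by
  intro N
  induction N using Nat.strong_induction_on with
  | _ N ih =>
    intro s hs
    rcases Nat.eq_zero_or_pos N with rfl | hN
    · have hse : s = ∅ := Finset.card_eq_zero.mp hs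
      subst hse
      rw [BellF_zero]
      have : Unique (Finpartition (∅ : Finset ℕ)) :=
        inferInstanceAs (Unique (Finpartition (⊥ : Finset ℕ)))
      exact Nat.card_unique
    · obtain ⟨k, rfl⟩ : ∃ k, N = k + 1 := ⟨N - 1, by omega⟩
      have hsne : s.Nonempty := Finset.card_pos.mp (by omega)
      obtain ⟨a, hamem⟩ := hsne
      have hins : insert a (s.erase a) = s := Finset.insert_erase hamem
      have hanotin : a ∉ s.erase a := Finset.notMem_erase a s
      have hcard : (s.erase a).card = k := by
        rw [Finset.card_erase_of_mem hamem]; omega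
      have key : ∀ (u : Finset ℕ), u.card = k →
          Nat.card (Finpartition (insert a u)) = ∑ j ∈ Finset.range (k + 1),
            k.choose j * BellF (k - j) → True := fun _ _ _ => trivial
      have main : ∀ (b : ℕ) (u : Finset ℕ), b ∉ u → u.card = k →
          Nat.card (Finpartition (insert b u)) =
            ∑ j ∈ Finset.range (k + 1), k.choose j * BellF (k - j) := by
        intro b u hb hu
        rw [finpartition_rec b u hb]
        have hstep : ∀ t ∈ u.powerset, Nat.card (Finpartition (u \ t)) = BellF (k - t.card) := by
          intro t ht
          have hts : t ⊆ u := Finset.mem_powerset.mp ht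
          have : (u \ t).card = k - t.card := by
            rw [Finset.card_sdiff_of_subset hts, hu]
          exact ih (k - t.card) (by omega) _ this
        rw [Finset.sum_congr rfl hstep]
        have := Finset.sum_powerset_apply_card (fun j => BellF (k - j)) (x := u)
        rw [this, hu]
        apply Finset.sum_congr rfl
        intro j _
        rw [smul_eq_mul]
      have h1 : Nat.card (Finpartition s) =
          ∑ j ∈ Finset.range (k + 1), k.choose j * BellF (k - j) := by
        rw [← hins]
        exact main a (s.erase a) hanotin hcard
      have h2 : BellF (k + 1) = ∑ j ∈ Finset.range (k + 1), k.choose j * BellF (k - j) := by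
        rw [BellF]
        conv_lhs => rw [Finset.range_add_one]
        exact main k (Finset.range k) Finset.notMem_range_self (Finset.card_range k)
      rw [h1, h2]

lemma BellF_succ (N : ℕ) :
    BellF (N + 1) = ∑ k ∈ Finset.range (N + 1), N.choose k * BellF k := by
  have h2 : BellF (N + 1) = ∑ j ∈ Finset.range (N + 1), N.choose j * BellF (N - j) := by
    rw [BellF]
    conv_lhs => rw [Finset.range_add_one]
    have main := finpartition_rec N (Finset.range N) Finset.notMem_range_self
    rw [main]
    have hstep : ∀ t ∈ (Finset.range N).powerset,
        Nat.card (Finpartition (Finset.range N \ t)) = BellF (N - t.card) := by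
      intro t ht
      have hts : t ⊆ Finset.range N := Finset.mem_powerset.mp ht
      apply card_finpartition_eq_bellF
      rw [Finset.card_sdiff_of_subset hts, Finset.card_range]
    rw [Finset.sum_congr rfl hstep]
    have := Finset.sum_powerset_apply_card (fun j => BellF (N - j)) (x := Finset.range N)
    rw [this, Finset.card_range]
    apply Finset.sum_congr rfl
    intro j _
    rw [smul_eq_mul]
  rw [h2]
  rw [← Finset.sum_range_reflect (fun j => N.choose j * BellF (N - j)) (N + 1)]
  apply Finset.sum_congr rfl
  intro j hj
  rw [Finset.mem_range] at hj
  have e1 : N + 1 - 1 - j = N - j := by omega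
  have e2 : N - (N - j) = j := by omega
  rw [e1, Nat.choose_symm (by omega), e2]


lemma wcount_eq_BellF : ∀ N, wcount N = BellF N := by
  intro N
  induction N using Nat.strong_induction_on with
  | _ N ih =>
    rcases Nat.eq_zero_or_pos N with rfl | hN
    · rw [wcount_zero, BellF_zero]
    · obtain ⟨k, rfl⟩ : ∃ k, N = k + 1 := ⟨N - 1, by omega⟩
      rw [wcount_succ, BellF_succ]
      apply Finset.sum_congr rfl
      intro j hj
      rw [Finset.mem_range] at hj
      rw [ih j (by omega)]

end VT

/-- `∑_λ g_λ(n) g_λ(m) = B(m+n)`. -/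
theorem stmt7 (m n : ℕ) :
    ∑ᶠ lam : YoungDiagram, g lam n * g lam m =
    Nat.card (Finpartition (Finset.Icc 1 (m + n))) := by
  rw [VT.sum_g_eq n m, ← VT.wcount_eq_g (n + m), VT.wcount_eq_BellF (n + m)]
  rw [VT.card_finpartition_eq_bellF (m + n) (Finset.Icc 1 (m + n))
    (by rw [Nat.card_Icc]; omega)]
  rw [Nat.add_comm n m]
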